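/- Under the deformation setup below, the space of formal series decomposes as a direct sum F ⊕ I*: every series f : ℕ → A can be written as f = φ + ι with φ ∈ F := {φ : ℕ → A | π(φ_n) = φ_n for all n} and ι ∈ I* := {ι : ℕ → A | ι = g ∗ Ĵ for some series g}, and this decomposition is unique (if φ + ι = φ' + ι' with φ, φ' ∈ F and ι, ι' ∈ I*, then φ = φ' and ι = ι'). -/

import Mathlib

/-- The star product of two formal series: `(f ∗ g)_n = ∑_{k+i+j=n} M_k(f_i, g_j)`. -/
noncomputable def starSeq {A : Type*} [CommRing A] (M : ℕ → A → A → A)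
    (f g : ℕ → A) : ℕ → A :=
  fun n => ∑ p ∈ Finset.HasAntidiagonal.antidiagonal n, ∑ q ∈ Finset.HasAntidiagonal.antidiagonal p.2,
    M p.1 (f q.1) (g q.2)

/-- The constraint function `J` viewed as a formal series `Ĵ = (J, 0, 0, …)`. -/
def Jhat {A : Type*} [CommRing A] (J : A) : ℕ → A :=
  fun n => if n = 0 then J else 0

lemma mem_erase_antidiag_lt {n : ℕ} {p : ℕ × ℕ}
    (hp : p ∈ (Finset.HasAntidiagonal.antidiagonal n).erase (0, n)) : p.2 < n := by
  rw [Finset.mem_erase, Finset.HasAntidiagonal.mem_antidiagonal] at hp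
  obtain ⟨hne, hsum⟩ := hp
  rcases Nat.lt_or_ge p.2 n with h | h
  · exact h
  · exfalso
    have h2 : p.2 = n := le_antisymm (by omega) h
    have h1 : p.1 = 0 := by omega
    exact hne (Prod.ext h1 h2)

/-- Recursive construction of `g` such that `f - g ∗ Ĵ` lies in `F`. -/
noncomputable def gRec {A : Type*} [CommRing A] (pJ : A → A) (M : ℕ → A → A → A)
    (J : A) (f : ℕ → A) : ℕ → A
  | n => pJ (f n - ∑ p ∈ ((Finset.HasAntidiagonal.antidiagonal n).erase (0, n)).attach,
      M p.1.1 (gRec pJ M J f p.1.2) J)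
  decreasing_by exact mem_erase_antidiag_lt p.2

theorem decomposition_F_oplus_Istar
    {R A : Type*} [CommRing R] [CommRing A] [Algebra R A]
    (J : A) (hJreg : ∀ a : A, a * J = 0 → a = 0)
    (π pJ : A →ₗ[R] A)
    (hπidem : ∀ a : A, π (π a) = π a)
    (hπJ : ∀ a : A, π (a * J) = 0)
    (hdecomp : ∀ f : A, f = π f + pJ f * J)
    (M : ℕ → A →ₗ[R] A →ₗ[R] A)
    (hM0 : ∀ f g : A, M 0 f g = f * g)
    (hMone : ∀ k, 1 ≤ k → ∀ f : A, M k 1 f = 0 ∧ M k f 1 = 0) :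
    (∀ f : ℕ → A, ∃ φ ι : ℕ → A,
        (∀ n, π (φ n) = φ n) ∧
        (∃ g : ℕ → A, ι = starSeq (fun k a b => M k a b) g (Jhat J)) ∧
        f = φ + ι) ∧
    (∀ φ φ' ι ι' : ℕ → A,
        (∀ n, π (φ n) = φ n) → (∀ n, π (φ' n) = φ' n) →
        (∃ g : ℕ → A, ι = starSeq (fun k a b => M k a b) g (Jhat J)) →
        (∃ g : ℕ → A, ι' = starSeq (fun k a b => M k a b) g (Jhat J)) →
        φ + ι = φ' + ι' → φ = φ' ∧ ι = ι') := by
  -- Key computation: `(g ∗ Ĵ)_n = ∑_{(k,i) ∈ antidiagonal n} M_k (g_i) J`.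
  have hstar : ∀ (g : ℕ → A) (n : ℕ),
      starSeq (fun k a b => M k a b) g (Jhat J) n
        = ∑ p ∈ Finset.HasAntidiagonal.antidiagonal n, M p.1 (g p.2) J := by
    intro g n
    unfold starSeq
    refine Finset.sum_congr rfl fun p hp => ?_
    rw [Finset.sum_eq_single (p.2, 0)]
    · simp [Jhat]
    · intro q hq hne
      rw [Finset.HasAntidiagonal.mem_antidiagonal] at hq
      have : q.2 ≠ 0 := by
        intro h
        exact hne (Prod.ext (by omega) h)
      simp [Jhat, this]
    · intro h
      exact absurd (by simp) h
  -- Split off the leading term.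
  have hsplit : ∀ (g : ℕ → A) (n : ℕ),
      starSeq (fun k a b => M k a b) g (Jhat J) n
        = g n * J + ∑ p ∈ (Finset.HasAntidiagonal.antidiagonal n).erase (0, n),
            M p.1 (g p.2) J := by
    intro g n
    rw [hstar]
    rw [← Finset.add_sum_erase _ _ (by simp : ((0 : ℕ), n) ∈ Finset.HasAntidiagonal.antidiagonal n)]
    rw [hM0]
  constructor
  · -- Existence
    intro f
    set g : ℕ → A := gRec (fun a => pJ a) (fun k a b => M k a b) J f with hg
    set ι : ℕ → A := starSeq (fun k a b => M k a b) g (Jhat J) with hι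
    have hgdef : ∀ n, g n = pJ (f n - ∑ p ∈ (Finset.HasAntidiagonal.antidiagonal n).erase (0, n),
        M p.1 (g p.2) J) := by
      intro n
      rw [hg]
      rw [gRec]
      rw [Finset.sum_attach ((Finset.HasAntidiagonal.antidiagonal n).erase (0, n))
        (fun p => M p.1 (gRec (fun a => pJ a) (fun k a b => M k a b) J f p.2) J)]
    refine ⟨f - ι, ι, ?_, ⟨g, rfl⟩, by abel⟩
    intro n
    have hr : (f - ι) n = π (f n - ∑ p ∈ (Finset.HasAntidiagonal.antidiagonal n).erase (0, n),
        M p.1 (g p.2) J) := by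
      set r := f n - ∑ p ∈ (Finset.HasAntidiagonal.antidiagonal n).erase (0, n), M p.1 (g p.2) J with hrdef
      have : ι n = g n * J + ∑ p ∈ (Finset.HasAntidiagonal.antidiagonal n).erase (0, n), M p.1 (g p.2) J :=
        hsplit g n
      have hgn : g n = pJ r := hgdef n
      have := hdecomp r
      simp only [Pi.sub_apply]
      rw [hι, hsplit g n, hgn]
      calc f n - (pJ r * J + ∑ p ∈ (Finset.HasAntidiagonal.antidiagonal n).erase (0, n), M p.1 (g p.2) J)
          = r - pJ r * J := by rw [hrdef]; ring
        _ = π r := by linear_combination this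
    rw [hr, hπidem]
  · -- Uniqueness
    intro φ φ' ι ι' hφ hφ' ⟨g, hgι⟩ ⟨g', hgι'⟩ heq
    -- ψ := φ - φ' = (g' - g) ∗ Ĵ componentwise
    have hψ : ∀ n, φ n - φ' n = (g' n - g n) * J
        + ∑ p ∈ (Finset.HasAntidiagonal.antidiagonal n).erase (0, n), M p.1 (g' p.2 - g p.2) J := by
      intro n
      have h1 : φ n + ι n = φ' n + ι' n := congrFun heq n
      have h2 : φ n - φ' n = ι' n - ι n := by linear_combination h1
      rw [h2, hgι, hgι', hsplit g n, hsplit g' n]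
      have : ∀ p : ℕ × ℕ, M p.1 (g' p.2 - g p.2) J
          = M p.1 (g' p.2) J - M p.1 (g p.2) J := by
        intro p; rw [map_sub]; simp
      simp_rw [this, sub_mul, Finset.sum_sub_distrib]
      ring
    -- strong induction: g' n - g n = 0 for all n
    have hz : ∀ n, g' n - g n = 0 := by
      intro n
      induction n using Nat.strong_induction_on with
      | _ n ih =>
        have htail : ∑ p ∈ (Finset.HasAntidiagonal.antidiagonal n).erase (0, n),
            M p.1 (g' p.2 - g p.2) J = 0 := by
          apply Finset.sum_eq_zero
          intro p hp
          rw [ih p.2 (mem_erase_antidiag_lt hp)]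
          simp
        have hn : φ n - φ' n = (g' n - g n) * J := by
          rw [hψ n, htail, add_zero]
        have hπψ : π (φ n - φ' n) = φ n - φ' n := by
          rw [map_sub, hφ n, hφ' n]
        have hzero : φ n - φ' n = 0 := by
          rw [← hπψ, hn, hπJ]
        apply hJreg
        rw [← hn, hzero]
    have hφeq : φ = φ' := by
      funext n
      have := hψ n
      rw [hz n, zero_mul, zero_add] at this
      have htail : ∑ p ∈ (Finset.HasAntidiagonal.antidiagonal n).erase (0, n),
          M p.1 (g' p.2 - g p.2) J = 0 := by
        apply Finset.sum_eq_zero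
        intro p hp
        rw [hz p.2]
        simp
      rw [htail] at this
      linear_combination this
    refine ⟨hφeq, ?_⟩
    have : φ + ι = φ + ι' := by rw [heq, hφeq]
    funext n
    have := congrFun this n
    simp only [Pi.add_apply] at this
    linear_combination this
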